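/- For stars K_{1,r} and K_{1,s} with s ≥ r ≥ 2, the edge open packing number of their Cartesian product equals rs: ρ_e^o(K_{1,r} □ K_{1,s}) = rs. -/

import Mathlib

open SimpleGraph

/-- An edge open packing (EOP) set: a set `B` of edges of `G` such that no edge of `G`
(other than the two edges themselves) joins an endvertex of one edge of `B` to an
endvertex of another edge of `B`. -/
def IsEOPSet {V : Type*} (G : SimpleGraph V) (B : Set (Sym2 V)) : Prop :=
  B ⊆ G.edgeSet ∧ ∀ e₁ ∈ B, ∀ e₂ ∈ B, e₁ ≠ e₂ →
    ∀ x ∈ e₁, ∀ y ∈ e₂, G.Adj x y → s(x, y) = e₁ ∨ s(x, y) = e₂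

/-- An induced matching: a set `M` of edges of `G` such that no edge of `G` joins an
endvertex of one edge of `M` to an endvertex of another edge of `M` (this in particular
forces `M` to be a matching). -/
def IsInducedMatching {V : Type*} (G : SimpleGraph V) (M : Set (Sym2 V)) : Prop :=
  M ⊆ G.edgeSet ∧ ∀ e₁ ∈ M, ∀ e₂ ∈ M, e₁ ≠ e₂ →
    ∀ x ∈ e₁, ∀ y ∈ e₂, ¬ G.Adj x y

/-- The edge open packing number `ρₑᵒ(G)`. -/
noncomputable def eopNum {V : Type*} (G : SimpleGraph V) : ℕ :=
  sSup {n | ∃ B : Finset (Sym2 V), IsEOPSet G ↑B ∧ B.card = n}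

/-- The induced matching number `ν_I(G)`. -/
noncomputable def inducedMatchingNum {V : Type*} (G : SimpleGraph V) : ℕ :=
  sSup {n | ∃ M : Finset (Sym2 V), IsInducedMatching G ↑M ∧ M.card = n}

/-- The independence number `α(G)`. -/
noncomputable def indepNum {V : Type*} (G : SimpleGraph V) : ℕ :=
  sSup {n | ∃ S : Finset V, (∀ x ∈ S, ∀ y ∈ S, ¬ G.Adj x y) ∧ S.card = n}

/-- The open packing number `ρᵒ(G)`: maximum size of a set of vertices whose open
neighborhoods are pairwise disjoint. -/
noncomputable def openPackNum {V : Type*} (G : SimpleGraph V) : ℕ :=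
  sSup {n | ∃ P : Finset V,
    (∀ x ∈ P, ∀ y ∈ P, x ≠ y → ∀ z, ¬ (G.Adj x z ∧ G.Adj y z)) ∧ P.card = n}

/-- The 2-packing number `ρ₂(G)`: maximum size of a set of vertices pairwise at
distance greater than 2. -/
noncomputable def twoPackNum {V : Type*} (G : SimpleGraph V) : ℕ :=
  sSup {n | ∃ P : Finset V,
    (∀ x ∈ P, ∀ y ∈ P, x ≠ y →
      ¬ G.Adj x y ∧ (∀ z, ¬ (G.Adj x z ∧ G.Adj z y))) ∧ P.card = n}

/-- The 3-packing number `ρ₃(G)`: maximum size of a set of vertices pairwise at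
distance greater than 3. -/
noncomputable def threePackNum {V : Type*} (G : SimpleGraph V) : ℕ :=
  sSup {n | ∃ P : Finset V,
    (∀ x ∈ P, ∀ y ∈ P, x ≠ y →
      ¬ G.Adj x y ∧ (∀ z, ¬ (G.Adj x z ∧ G.Adj z y)) ∧
      (∀ z w, ¬ (G.Adj x z ∧ G.Adj z w ∧ G.Adj w y))) ∧ P.card = n}

/-- Minimum degree of `G` (degrees measured via `Set.ncard` of neighborhoods). -/
noncomputable def minDeg {V : Type*} (G : SimpleGraph V) : ℕ :=
  sInf {d | ∃ v, d = (G.neighborSet v).ncard}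

/-- The lexicographic product `G ∘ H`. -/
def lexProd {V W : Type*} (G : SimpleGraph V) (H : SimpleGraph W) :
    SimpleGraph (V × W) where
  Adj x y := G.Adj x.1 y.1 ∨ (x.1 = y.1 ∧ H.Adj x.2 y.2)
  symm := ⟨by
    rintro ⟨g, h⟩ ⟨g', h'⟩ (hgg | ⟨rfl, hh⟩)
    · exact Or.inl hgg.symm
    · exact Or.inr ⟨rfl, hh.symm⟩⟩
  loopless := ⟨by
    rintro ⟨g, h⟩ (hgg | ⟨-, hh⟩)
    · exact G.ne_of_adj hgg rfl
    · exact H.ne_of_adj hh rfl⟩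

/-- The direct (tensor) product `G × H`. -/
def tensorProd {V W : Type*} (G : SimpleGraph V) (H : SimpleGraph W) :
    SimpleGraph (V × W) where
  Adj x y := G.Adj x.1 y.1 ∧ H.Adj x.2 y.2
  symm := ⟨by rintro ⟨g, h⟩ ⟨g', h'⟩ ⟨h1, h2⟩; exact ⟨h1.symm, h2.symm⟩⟩
  loopless := ⟨by rintro ⟨g, h⟩ ⟨h1, -⟩; exact G.ne_of_adj h1 rfl⟩

/-- The strong product `G ⊠ H`. -/
def strongProd {V W : Type*} (G : SimpleGraph V) (H : SimpleGraph W) :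
    SimpleGraph (V × W) where
  Adj x y := x ≠ y ∧ (x.1 = y.1 ∨ G.Adj x.1 y.1) ∧ (x.2 = y.2 ∨ H.Adj x.2 y.2)
  symm := ⟨by
    rintro x y ⟨hne, h1, h2⟩
    exact ⟨hne.symm, h1.imp Eq.symm (fun h => h.symm), h2.imp Eq.symm (fun h => h.symm)⟩⟩
  loopless := ⟨by rintro x ⟨hne, -, -⟩; exact hne rfl⟩

/-- The star `K_{1,r}` with center `none` and leaves `some i`. -/
def starGraph (r : ℕ) : SimpleGraph (Option (Fin r)) :=
  SimpleGraph.fromRel (fun x _ => x = none)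

/-- The spider `S^k`: obtained from `K_{1,k}` by subdividing every edge exactly once.
The center is `none`, `some (i, false)` are the support vertices and `some (i, true)`
the leaves. -/
def spiderGraph (k : ℕ) : SimpleGraph (Option (Fin k × Bool)) :=
  SimpleGraph.fromRel (fun x y =>
    (x = none ∧ ∃ i, y = some (i, false)) ∨
    (∃ i, x = some (i, false) ∧ y = some (i, true)))

/-- The `n`-dimensional hypercube `Q_n`: vertices are `Fin n → Bool`, adjacent iff they
differ in exactly one coordinate. -/
def hypercube (n : ℕ) : SimpleGraph (Fin n → Bool) :=
  SimpleGraph.fromRel (fun x y =>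
    (Finset.univ.filter (fun i => x i ≠ y i)).card = 1)

/-- The corona product `G ⊙ H`: vertices `(v, none)` form a copy of `G`, vertices
`(v, some h)` form a copy of `H` for each `v`, and `(v, none)` is joined to every
vertex of its copy of `H`. -/
def corona {V W : Type*} (G : SimpleGraph V) (H : SimpleGraph W) :
    SimpleGraph (V × Option W) :=
  SimpleGraph.fromRel (fun x y =>
    (x.2 = none ∧ y.2 = none ∧ G.Adj x.1 y.1) ∨
    (x.1 = y.1 ∧ ∃ h h', x.2 = some h ∧ y.2 = some h' ∧ H.Adj h h') ∨
    (x.1 = y.1 ∧ x.2 = none ∧ ∃ h, y.2 = some h))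

/-- The set of endvertices of the edges of `B`. -/
def supportSet {V : Type*} (B : Set (Sym2 V)) : Set V := {v | ∃ e ∈ B, v ∈ e}

namespace Stmt15Aux

lemma count_lemma {r s : ℕ} (hs : 2 ≤ s) (U W : Finset (Fin r × Fin s))
    (H : ∀ p ∈ U, ∀ q ∈ W, p ≠ q → p.1 ≠ q.1 ∧ p.2 ≠ q.2) :
    U.card + W.card ≤ r * s := by
  have hzlt : 0 < s := by omega
  have holt : 1 < s := by omega
  set f : Fin r × Fin s → Fin r × Fin s :=
    fun p => (p.1, if p.2 = ⟨0, hzlt⟩ then ⟨1, holt⟩ else ⟨0, hzlt⟩) with hf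
  have hfne : ∀ p : Fin r × Fin s, (f p).2 ≠ p.2 := by
    intro p
    simp only [hf]
    split
    · rename_i h; rw [h]; simp [Fin.ext_iff]
    · rename_i h; exact fun hc => h hc.symm
  have key : (U ∩ W).card ≤ (Finset.univ \ (U ∪ W)).card := by
    apply Finset.card_le_card_of_injOn f
    · intro p hp
      rw [Finset.mem_coe, Finset.mem_inter] at hp
      rw [Finset.mem_coe, Finset.mem_sdiff]
      refine ⟨Finset.mem_univ _, fun hmem => ?_⟩
      have hne : f p ≠ p := fun hc => hfne p (by rw [hc])
      rcases Finset.mem_union.mp hmem with h | h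
      · exact (H _ h _ hp.2 hne).1 rfl
      · exact (H _ hp.1 _ h hne.symm).1 rfl
    · intro p hp p' hp' heq
      simp only [Finset.coe_inter, Set.mem_inter_iff, Finset.mem_coe] at hp hp'
      by_contra hne
      have := (H _ hp.1 _ hp'.2 hne).1
      have h1 : (f p).1 = p.1 := rfl
      have h1' : (f p').1 = p'.1 := rfl
      rw [← h1, ← h1', heq] at this
      exact this rfl
  have hcui : (Finset.univ : Finset (Fin r × Fin s)).card = r * s := by
    simp
  have h2 : (Finset.univ \ (U ∪ W)).card + (U ∪ W).card = r * s := by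
    rw [Finset.card_sdiff_add_card_eq_card (Finset.subset_univ _), hcui]
  have h3 := Finset.card_union_add_card_inter U W
  omega

variable {r s : ℕ}

abbrev VV (r s : ℕ) := Option (Fin r) × Option (Fin s)

abbrev GG (r s : ℕ) : SimpleGraph (VV r s) := (_root_.starGraph r).boxProd (_root_.starGraph s)

lemma star_adj {n : ℕ} (a b : Option (Fin n)) :
    (_root_.starGraph n).Adj a b ↔ a ≠ b ∧ (a = none ∨ b = none) := by
  simp [_root_.starGraph, SimpleGraph.fromRel_adj]

lemma GG_adj (x y : VV r s) :
    (GG r s).Adj x y ↔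
      ((_root_.starGraph r).Adj x.1 y.1 ∧ x.2 = y.2) ∨ ((_root_.starGraph s).Adj x.2 y.2 ∧ x.1 = y.1) :=
  SimpleGraph.boxProd_adj

def cu (r s : ℕ) (i : Fin r) : Sym2 (VV r s) := s(((none : Option (Fin r)), (none : Option (Fin s))), (some i, none))
def cv (r s : ℕ) (j : Fin s) : Sym2 (VV r s) := s(((none : Option (Fin r)), (none : Option (Fin s))), (none, some j))
def uw (r s : ℕ) (i : Fin r) (j : Fin s) : Sym2 (VV r s) := s(((some i : Option (Fin r)), (none : Option (Fin s))), (some i, some j))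
def vw (r s : ℕ) (i : Fin r) (j : Fin s) : Sym2 (VV r s) := s(((none : Option (Fin r)), (some j : Option (Fin s))), (some i, some j))

variable {B : Set (Sym2 (VV r s))} (hB : IsEOPSet (GG r s) B)

include hB

lemma I1 {i i' : Fin r} {j : Fin s} (h1 : cu r s i ∈ B) (h2 : uw r s i' j ∈ B) : i = i' := by
  by_contra hne
  have hadj : (GG r s).Adj (none, none) (some i', none) := by
    rw [GG_adj]; simp [star_adj]
  have := hB.2 _ h1 _ h2 (by simp [cu, uw, Sym2.eq_iff]) (none, none) (by simp [cu]) (some i', none)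
    (by simp [uw]) hadj
  rcases this with h | h
  · rw [cu, Sym2.eq_iff] at h
    simp only [Prod.mk.injEq, Option.some.injEq] at h
    tauto
  · rw [uw, Sym2.eq_iff] at h
    simp at h

lemma I2 {i i' : Fin r} {j : Fin s} (h1 : cu r s i ∈ B) (h2 : vw r s i' j ∈ B) : False := by
  have hadj : (GG r s).Adj ((none : Option (Fin r)), (none : Option (Fin s))) (none, some j) := by
    rw [GG_adj]; simp [star_adj]
  have := hB.2 _ h1 _ h2 (by simp [cu, vw, Sym2.eq_iff]) (none, none) (by simp [cu]) (none, some j)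
    (by simp [vw]) hadj
  rcases this with h | h
  · rw [cu, Sym2.eq_iff] at h; simp at h
  · rw [vw, Sym2.eq_iff] at h; simp at h

lemma I3 {j j' : Fin s} {i : Fin r} (h1 : cv r s j ∈ B) (h2 : vw r s i j' ∈ B) : j = j' := by
  by_contra hne
  have hadj : (GG r s).Adj ((none : Option (Fin r)), (none : Option (Fin s))) (none, some j') := by
    rw [GG_adj]; simp [star_adj]
  have := hB.2 _ h1 _ h2 (by simp [cv, vw, Sym2.eq_iff]) (none, none) (by simp [cv]) (none, some j')
    (by simp [vw]) hadj
  rcases this with h | h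
  · rw [cv, Sym2.eq_iff] at h
    simp only [Prod.mk.injEq, Option.some.injEq] at h
    tauto
  · rw [vw, Sym2.eq_iff] at h; simp at h

lemma I4 {j j' : Fin s} {i : Fin r} (h1 : cv r s j ∈ B) (h2 : uw r s i j' ∈ B) : False := by
  have hadj : (GG r s).Adj ((none : Option (Fin r)), (none : Option (Fin s))) (some i, none) := by
    rw [GG_adj]; simp [star_adj]
  have := hB.2 _ h1 _ h2 (by simp [cv, uw, Sym2.eq_iff]) (none, none) (by simp [cv]) (some i, none)
    (by simp [uw]) hadj
  rcases this with h | h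
  · rw [cv, Sym2.eq_iff] at h; simp at h
  · rw [uw, Sym2.eq_iff] at h; simp at h

lemma I5 {i : Fin r} {j j' : Fin s} (h1 : uw r s i j ∈ B) (h2 : vw r s i j' ∈ B) : j = j' := by
  by_contra hne
  have hadj : (GG r s).Adj ((some i : Option (Fin r)), (none : Option (Fin s))) (some i, some j') := by
    rw [GG_adj]; simp [star_adj]
  have := hB.2 _ h1 _ h2 (by simp [uw, vw, Sym2.eq_iff]) (some i, none) (by simp [uw])
    (some i, some j') (by simp [vw]) hadj
  rcases this with h | h
  · rw [uw, Sym2.eq_iff] at h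
    simp only [Prod.mk.injEq, Option.some.injEq] at h
    tauto
  · rw [vw, Sym2.eq_iff] at h; simp at h

lemma I6 {i i' : Fin r} {j : Fin s} (h1 : uw r s i j ∈ B) (h2 : vw r s i' j ∈ B) : i = i' := by
  by_contra hne
  have hadj : (GG r s).Adj ((some i : Option (Fin r)), (some j : Option (Fin s))) (none, some j) := by
    rw [GG_adj]; simp [star_adj]
  have := hB.2 _ h1 _ h2 (by simp [uw, vw, Sym2.eq_iff]) (some i, some j) (by simp [uw])
    (none, some j) (by simp [vw]) hadj
  rcases this with h | h
  · rw [uw, Sym2.eq_iff] at h; simp at h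
  · rw [vw, Sym2.eq_iff] at h
    simp only [Prod.mk.injEq, Option.some.injEq] at h
    tauto


omit hB in
lemma classify {e : Sym2 (VV r s)} (he : e ∈ (GG r s).edgeSet) :
    (∃ i, e = cu r s i) ∨ (∃ j, e = cv r s j) ∨
    (∃ i j, e = uw r s i j) ∨ (∃ i j, e = vw r s i j) := by
  induction e using Sym2.ind with
  | _ x y =>
    rw [SimpleGraph.mem_edgeSet, GG_adj] at he
    obtain ⟨a, b⟩ := x
    obtain ⟨c, d⟩ := y
    rcases he with ⟨h1, h2⟩ | ⟨h1, h2⟩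
    · rw [star_adj] at h1
      obtain ⟨hne, hn⟩ := h1
      simp only at h2
      subst h2
      rcases hn with h | h
      · subst h
        obtain ⟨i, rfl⟩ := Option.ne_none_iff_exists'.mp (Ne.symm hne)
        cases b with
        | none => exact Or.inl ⟨i, rfl⟩
        | some j => exact Or.inr (Or.inr (Or.inr ⟨i, j, rfl⟩))
      · subst h
        obtain ⟨i, rfl⟩ := Option.ne_none_iff_exists'.mp hne
        cases b with
        | none => exact Or.inl ⟨i, Sym2.eq_swap⟩
        | some j => exact Or.inr (Or.inr (Or.inr ⟨i, j, Sym2.eq_swap⟩))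
    · rw [star_adj] at h1
      obtain ⟨hne, hn⟩ := h1
      simp only at h2
      subst h2
      rcases hn with h | h
      · subst h
        obtain ⟨j, rfl⟩ := Option.ne_none_iff_exists'.mp (Ne.symm hne)
        cases a with
        | none => exact Or.inr (Or.inl ⟨j, rfl⟩)
        | some i => exact Or.inr (Or.inr (Or.inl ⟨i, j, rfl⟩))
      · subst h
        obtain ⟨j, rfl⟩ := Option.ne_none_iff_exists'.mp hne
        cases a with
        | none => exact Or.inr (Or.inl ⟨j, Sym2.eq_swap⟩)
        | some i => exact Or.inr (Or.inr (Or.inl ⟨i, j, Sym2.eq_swap⟩))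


omit hB in
lemma upper (h1 : 2 ≤ r) (h2 : r ≤ s) (Bf : Finset (Sym2 (VV r s)))
    (hBf : IsEOPSet (GG r s) ↑Bf) : Bf.card ≤ r * s := by
  have hs2 : 2 ≤ s := le_trans h1 h2
  have hmem : ∀ {e : Sym2 (VV r s)}, e ∈ Bf → e ∈ (↑Bf : Set (Sym2 (VV r s))) :=
    fun h => Finset.mem_coe.mpr h
  by_cases hw : ∃ (i : Fin r) (j : Fin s), uw r s i j ∈ Bf ∨ vw r s i j ∈ Bf
  · obtain ⟨i₀, j₀, hw0⟩ := hw
    by_cases hc : (∃ i, cu r s i ∈ Bf) ∨ (∃ j, cv r s j ∈ Bf)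
    · rcases hc with ⟨i₁, hcu⟩ | ⟨j₁, hcv⟩
      · -- only cu i₁ and uw i₁ _ possible
        have huw0 : uw r s i₀ j₀ ∈ Bf := by
          rcases hw0 with h | h
          · exact h
          · exact (I2 hBf (hmem hcu) (hmem h)).elim
        have hi10 : i₁ = i₀ := I1 hBf (hmem hcu) (hmem huw0)
        have hsub : Bf ⊆ insert (cu r s i₁) (Finset.univ.image (uw r s i₁)) := by
          intro e he
          rcases classify (hBf.1 (hmem he)) with ⟨i, rfl⟩ | ⟨j, rfl⟩ | ⟨i, j, rfl⟩ | ⟨i, j, rfl⟩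
          · have : i = i₀ := I1 hBf (hmem he) (hmem huw0)
            rw [this, ← hi10]
            exact Finset.mem_insert_self _ _
          · exact (I4 hBf (hmem he) (hmem huw0)).elim
          · have : i₁ = i := I1 hBf (hmem hcu) (hmem he)
            subst this
            exact Finset.mem_insert_of_mem (Finset.mem_image_of_mem _ (Finset.mem_univ j))
          · exact (I2 hBf (hmem hcu) (hmem he)).elim
        calc Bf.card ≤ _ := Finset.card_le_card hsub
          _ ≤ (Finset.univ.image (uw r s i₁)).card + 1 := Finset.card_insert_le _ _
          _ ≤ (Finset.univ : Finset (Fin s)).card + 1 :=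
              Nat.add_le_add_right Finset.card_image_le 1
          _ = s + 1 := by simp
          _ ≤ r * s := by nlinarith
      · have hvw0 : vw r s i₀ j₀ ∈ Bf := by
          rcases hw0 with h | h
          · exact (I4 hBf (hmem hcv) (hmem h)).elim
          · exact h
        have hj10 : j₁ = j₀ := I3 hBf (hmem hcv) (hmem hvw0)
        have hsub : Bf ⊆ insert (cv r s j₁) (Finset.univ.image (fun i => vw r s i j₁)) := by
          intro e he
          rcases classify (hBf.1 (hmem he)) with ⟨i, rfl⟩ | ⟨j, rfl⟩ | ⟨i, j, rfl⟩ | ⟨i, j, rfl⟩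
          · exact (I2 hBf (hmem he) (hmem hvw0)).elim
          · have : j = j₀ := I3 hBf (hmem he) (hmem hvw0)
            rw [this, ← hj10]
            exact Finset.mem_insert_self _ _
          · exact (I4 hBf (hmem hcv) (hmem he)).elim
          · have : j₁ = j := I3 hBf (hmem hcv) (hmem he)
            subst this
            exact Finset.mem_insert_of_mem (Finset.mem_image_of_mem _ (Finset.mem_univ i))
        calc Bf.card ≤ _ := Finset.card_le_card hsub
          _ ≤ (Finset.univ.image (fun i => vw r s i j₁)).card + 1 := Finset.card_insert_le _ _
          _ ≤ (Finset.univ : Finset (Fin r)).card + 1 :=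
              Nat.add_le_add_right Finset.card_image_le 1
          _ = r + 1 := by simp
          _ ≤ r * s := by nlinarith
    · push_neg at hc
      obtain ⟨hnocu, hnocv⟩ := hc
      classical
      set U : Finset (Fin r × Fin s) :=
        Finset.univ.filter (fun p => uw r s p.1 p.2 ∈ Bf) with hU
      set W : Finset (Fin r × Fin s) :=
        Finset.univ.filter (fun p => vw r s p.1 p.2 ∈ Bf) with hW
      have hsub : Bf ⊆ U.image (fun p => uw r s p.1 p.2) ∪ W.image (fun p => vw r s p.1 p.2) := by
        intro e he
        rcases classify (hBf.1 (hmem he)) with ⟨i, rfl⟩ | ⟨j, rfl⟩ | ⟨i, j, rfl⟩ | ⟨i, j, rfl⟩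
        · exact (hnocu i he).elim
        · exact (hnocv j he).elim
        · refine Finset.mem_union_left _ ?_
          exact Finset.mem_image_of_mem _ (Finset.mem_filter.mpr ⟨Finset.mem_univ (i, j), he⟩)
        · refine Finset.mem_union_right _ ?_
          exact Finset.mem_image_of_mem _ (Finset.mem_filter.mpr ⟨Finset.mem_univ (i, j), he⟩)
      have hH : ∀ p ∈ U, ∀ q ∈ W, p ≠ q → p.1 ≠ q.1 ∧ p.2 ≠ q.2 := by
        intro p hp q hq hne
        have hpu : uw r s p.1 p.2 ∈ Bf := (Finset.mem_filter.mp hp).2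
        have hqv : vw r s q.1 q.2 ∈ Bf := (Finset.mem_filter.mp hq).2
        constructor
        · intro h
          rw [← h] at hqv
          have : p.2 = q.2 := I5 hBf (hmem hpu) (hmem hqv)
          exact hne (Prod.ext h this)
        · intro h
          rw [← h] at hqv
          have : p.1 = q.1 := I6 hBf (hmem hpu) (hmem hqv)
          exact hne (Prod.ext this h)
      calc Bf.card ≤ _ := Finset.card_le_card hsub
        _ ≤ (U.image (fun p => uw r s p.1 p.2)).card + (W.image (fun p => vw r s p.1 p.2)).card :=
            Finset.card_union_le _ _
        _ ≤ U.card + W.card := Nat.add_le_add Finset.card_image_le Finset.card_image_le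
        _ ≤ r * s := count_lemma hs2 U W hH
  · push_neg at hw
    have hsub : Bf ⊆ (Finset.univ.image (cu r s)) ∪ (Finset.univ.image (cv r s)) := by
      intro e he
      rcases classify (hBf.1 (hmem he)) with ⟨i, rfl⟩ | ⟨j, rfl⟩ | ⟨i, j, rfl⟩ | ⟨i, j, rfl⟩
      · exact Finset.mem_union_left _ (Finset.mem_image_of_mem _ (Finset.mem_univ i))
      · exact Finset.mem_union_right _ (Finset.mem_image_of_mem _ (Finset.mem_univ j))
      · exact ((hw i j).1 he).elim
      · exact ((hw i j).2 he).elim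
    calc Bf.card ≤ _ := Finset.card_le_card hsub
      _ ≤ (Finset.univ.image (cu r s)).card + (Finset.univ.image (cv r s)).card :=
          Finset.card_union_le _ _
      _ ≤ (Finset.univ : Finset (Fin r)).card + (Finset.univ : Finset (Fin s)).card :=
          Nat.add_le_add Finset.card_image_le Finset.card_image_le
      _ = r + s := by simp
      _ ≤ r * s := by nlinarith


omit hB in
lemma uw_injective : Function.Injective (fun p : Fin r × Fin s => uw r s p.1 p.2) := by
  intro p q h
  simp only [uw, Sym2.eq_iff, Prod.mk.injEq, Option.some.injEq] at h
  rcases h with ⟨⟨h1, -⟩, ⟨-, h2⟩⟩ | ⟨⟨-, h⟩, -⟩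
  · exact Prod.ext h1 h2
  · exact absurd h (by simp)

omit hB in
lemma lower_isEOP :
    IsEOPSet (GG r s) ↑(Finset.univ.image (fun p : Fin r × Fin s => uw r s p.1 p.2)) := by
  constructor
  · intro e he
    simp only [Finset.coe_image, Finset.coe_univ, Set.image_univ, Set.mem_range] at he
    obtain ⟨p, rfl⟩ := he
    rw [uw, SimpleGraph.mem_edgeSet, GG_adj]
    simp [star_adj]
  · intro e₁ h₁ e₂ h₂ hne x hx y hy hadj
    simp only [Finset.coe_image, Finset.coe_univ, Set.image_univ, Set.mem_range] at h₁ h₂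
    obtain ⟨⟨i, j⟩, rfl⟩ := h₁
    obtain ⟨⟨i', j'⟩, rfl⟩ := h₂
    rw [uw, Sym2.mem_iff] at hx hy
    rcases hx with rfl | rfl <;> rcases hy with rfl | rfl
    · rw [GG_adj] at hadj
      simp [star_adj] at hadj
    · rw [GG_adj] at hadj
      simp only [star_adj] at hadj
      rcases hadj with ⟨⟨-, h⟩, -⟩ | ⟨-, h⟩
      · simp at h
      · simp only [Option.some.injEq] at h
        subst h
        exact Or.inr rfl
    · rw [GG_adj] at hadj
      simp only [star_adj] at hadj
      rcases hadj with ⟨⟨-, h⟩, -⟩ | ⟨-, h⟩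
      · simp at h
      · simp only [Option.some.injEq] at h
        subst h
        exact Or.inl Sym2.eq_swap
    · rw [GG_adj] at hadj
      simp [star_adj] at hadj

omit hB in
lemma lower_card :
    (Finset.univ.image (fun p : Fin r × Fin s => uw r s p.1 p.2)).card = r * s := by
  rw [Finset.card_image_of_injective _ uw_injective]
  simp

end Stmt15Aux

/-- For stars `K_{1,r}` and `K_{1,s}` with `s ≥ r ≥ 2`, `ρₑᵒ(K_{1,r} □ K_{1,s}) = r·s`. -/
theorem stmt_15 (r s : ℕ) (h1 : 2 ≤ r) (h2 : r ≤ s) :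
    eopNum ((_root_.starGraph r).boxProd (_root_.starGraph s)) = r * s := by
  classical
  have hwit : r * s ∈ {n | ∃ B : Finset (Sym2 (Option (Fin r) × Option (Fin s))),
      IsEOPSet ((_root_.starGraph r).boxProd (_root_.starGraph s)) ↑B ∧ B.card = n} :=
    ⟨Finset.univ.image (fun p : Fin r × Fin s => Stmt15Aux.uw r s p.1 p.2),
      Stmt15Aux.lower_isEOP, Stmt15Aux.lower_card⟩
  have hub : ∀ n ∈ {n | ∃ B : Finset (Sym2 (Option (Fin r) × Option (Fin s))),
      IsEOPSet ((_root_.starGraph r).boxProd (_root_.starGraph s)) ↑B ∧ B.card = n}, n ≤ r * s := by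
    rintro n ⟨B, hB, rfl⟩
    exact Stmt15Aux.upper h1 h2 B hB
  exact le_antisymm (csSup_le ⟨r * s, hwit⟩ hub) (le_csSup ⟨r * s, hub⟩ hwit)
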